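/- The amended Blanchet protocol achieves its authentication goal: for every bundle Υ = (Θ,→) that is a run of the amended protocol, all messages a,b of sort A, s of sort S, d of sort D, and every strand z ∈ Dom(Θ), if htin(Θ,z,2,resp(a,b,s,d)), non(Θ,a⁻¹), and non(Θ,b⁻¹) hold, then there exist d₀ of sort D and z₀ ∈ Dom(Θ) with htin(Θ,z₀,1,init(a,b,s,d₀)); in particular the initiator and responder strands agree on the keys a and b and the symmetric key s. -/

import Mathlib

/-- The four sorts of the Simple Crypto Algebra signature. -/
inductive MSort : Type
  | top | A | S | D
deriving DecidableEq

/-- Message terms over a set `V` of variables (the free order-sorted algebra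
in canonical form; ground messages are `MTerm Empty`). -/
inductive MTerm (V : Type) : Type
  | var (v : V)
  | akey (i : ℕ) (b : Bool)   -- asymmetric key constants: `a_i` when `b = false`, `b_i` when `b = true`
  | skey (i : ℕ)              -- symmetric key constants `s_i`
  | data (i : ℕ)              -- data constants
  | invk (t : MTerm V)        -- key inverse (kept only where it cannot be reduced)
  | pair (t₀ t₁ : MTerm V)
  | enc (t k : MTerm V)

namespace MTerm

/-- The sort of a term (`none` when ill-sorted), given variable sorts `so`. -/
def srt {V : Type} (so : V → MSort) : MTerm V → Option MSort
  | var v => some (so v)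
  | akey _ _ => some .A
  | skey _ => some .S
  | data _ => some .D
  | invk t => match t.srt so with
      | some .A => some .A
      | some .S => some .S
      | _ => none
  | pair t₀ t₁ => match t₀.srt so, t₁.srt so with
      | some _, some _ => some .top
      | _, _ => none
  | enc t k => match t.srt so, k.srt so with
      | some _, some .A => some .top
      | some _, some .S => some .top
      | _, _ => none

/-- The key-inverse operation on canonical terms. -/
def invOp {V : Type} (so : V → MSort) : MTerm V → MTerm V
  | var v => if so v = .S then var v else invk (var v)
  | akey i b => akey i (!b)
  | skey i => skey i
  | invk t => t
  | t => invk t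

/-- Apply a substitution (an algebra homomorphism determined by its action on
variables), normalizing inverses; `so'` gives the sorts of target variables. -/
def subst {V W : Type} (so' : W → MSort) (σ : V → MTerm W) : MTerm V → MTerm W
  | var v => σ v
  | akey i b => akey i b
  | skey i => skey i
  | data i => data i
  | invk t => invOp so' (t.subst so' σ)
  | pair t₀ t₁ => pair (t₀.subst so' σ) (t₁.subst so' σ)
  | enc t k => enc (t.subst so' σ) (k.subst so' σ)

end MTerm

/-- Subsort relation: every sort is ≤ itself and ≤ ⊤. -/
def SLe (s₁ s₂ : MSort) : Prop := s₁ = s₂ ∨ s₂ = .top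

/-- `t` is a message of sort `s` (up to subsorting). -/
def HasSort {V : Type} (so : V → MSort) (t : MTerm V) (s : MSort) : Prop :=
  ∃ s', t.srt so = some s' ∧ SLe s' s

def WellSorted {V : Type} (so : V → MSort) (t : MTerm V) : Prop :=
  (t.srt so).isSome = true

/-- Atoms are the messages of sort A, S or D. -/
def IsAtomM {V : Type} (so : V → MSort) (t : MTerm V) : Prop :=
  t.srt so = some .A ∨ t.srt so = some .S ∨ t.srt so = some .D

/-- Sorting of ground (variable-free) terms. -/
def gSo : Empty → MSort := fun e => nomatch e

/-- Ground messages: the initial algebra. -/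
abbrev Msg := MTerm Empty

/-- The carried-by relation `t₀ ⊑ t₁`. -/
inductive Carries {V : Type} : MTerm V → MTerm V → Prop
  | refl (t) : Carries t t
  | pairL {t t₀ t₁} : Carries t t₀ → Carries t (.pair t₀ t₁)
  | pairR {t t₀ t₁} : Carries t t₁ → Carries t (.pair t₀ t₁)
  | encP {t t₀ k} : Carries t t₀ → Carries t (.enc t₀ k)
/-- Events: transmission `+t` or reception `−t`. -/
inductive EvtT (V : Type) : Type
  | send (t : MTerm V)
  | recv (t : MTerm V)

namespace EvtT

def msg {V : Type} : EvtT V → MTerm V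
  | send t => t
  | recv t => t

def IsSend {V : Type} : EvtT V → Prop
  | send _ => True
  | recv _ => False

def IsRecv {V : Type} : EvtT V → Prop
  | send _ => False
  | recv _ => True

def subst {V W : Type} (so' : W → MSort) (σ : V → MTerm W) : EvtT V → EvtT W
  | send t => send (t.subst so' σ)
  | recv t => recv (t.subst so' σ)

end EvtT

/-- A default event (used only for out-of-range indexing). -/
def dEvt {V : Type} : EvtT V := .send (.data 0)

/-- A strand space: a finite non-empty sequence of traces (finite non-empty
sequences of events); strands are indices into the sequence. -/
structure SSpaceT (V : Type) where
  tr : List (List (EvtT V))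
  nonnil : tr ≠ []
  ne : ∀ C ∈ tr, C ≠ []

namespace SSpaceT

variable {V : Type}

/-- The trace of strand `s`. -/
def trace (Θ : SSpaceT V) (s : ℕ) : List (EvtT V) := Θ.tr.getD s []

/-- `s` is a strand of `Θ`, i.e. a member of `Dom(Θ)`. -/
def IsStrand (Θ : SSpaceT V) (s : ℕ) : Prop := s < Θ.tr.length

/-- `n = (s, i)` is a node of `Θ`. -/
def IsNode (Θ : SSpaceT V) (n : ℕ × ℕ) : Prop :=
  n.1 < Θ.tr.length ∧ n.2 < (Θ.trace n.1).length

/-- The event at node `n`. -/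
def evt (Θ : SSpaceT V) (n : ℕ × ℕ) : EvtT V := (Θ.trace n.1).getD n.2 dEvt

end SSpaceT

/-- `t` originates in trace `C` at index `i`. -/
def OrigAt {V : Type} (C : List (EvtT V)) (t : MTerm V) (i : ℕ) : Prop :=
  i < C.length ∧ (C.getD i dEvt).IsSend ∧ Carries t (C.getD i dEvt).msg ∧
    ∀ j < i, ¬ Carries t (C.getD j dEvt).msg

/-- `t` is non-originating in `Θ`. -/
def SSpaceT.Non {V : Type} (Θ : SSpaceT V) (t : MTerm V) : Prop :=
  ∀ s, Θ.IsStrand s → ∀ i, ¬ OrigAt (Θ.trace s) t i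

/-- `t` uniquely originates in `Θ` at node `n`. -/
def SSpaceT.Uniq {V : Type} (Θ : SSpaceT V) (t : MTerm V) (n : ℕ × ℕ) : Prop :=
  Θ.IsStrand n.1 ∧ OrigAt (Θ.trace n.1) t n.2 ∧
    ∀ s i, Θ.IsStrand s → OrigAt (Θ.trace s) t i → s = n.1 ∧ i = n.2

/-- Strand succession edges `(s, i) ⇒ (s, i+1)`. -/
def SuccEdge {V : Type} (Θ : SSpaceT V) (n₀ n₁ : ℕ × ℕ) : Prop :=
  n₀.1 = n₁.1 ∧ n₁.2 = n₀.2 + 1 ∧ Θ.IsNode n₁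

/-- A bundle: a ground strand space together with communication edges forming,
with the strand-succession edges, a finite directed acyclic graph in which
every reception has a unique matching transmission. -/
structure Bundle where
  Θ : SSpaceT Empty
  comm : (ℕ × ℕ) → (ℕ × ℕ) → Prop
  comm_nodes : ∀ n₀ n₁, comm n₀ n₁ → Θ.IsNode n₀ ∧ Θ.IsNode n₁
  comm_evt : ∀ n₀ n₁, comm n₀ n₁ → ∃ t, Θ.evt n₀ = .send t ∧ Θ.evt n₁ = .recv t
  comm_uniq : ∀ n₁, Θ.IsNode n₁ → (Θ.evt n₁).IsRecv → ∃! n₀, comm n₀ n₁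
  acyclic : ∀ n, ¬ Relation.TransGen (fun m₀ m₁ => SuccEdge Θ m₀ m₁ ∨ comm m₀ m₁) n n

/-- The edge relation of a bundle. -/
def Bundle.edge (Υ : Bundle) (n₀ n₁ : ℕ × ℕ) : Prop :=
  SuccEdge Υ.Θ n₀ n₁ ∨ Υ.comm n₀ n₁

/-- The precedes relation `≺` of a bundle: the transitive closure of the edges. -/
def Bundle.prec (Υ : Bundle) : (ℕ × ℕ) → (ℕ × ℕ) → Prop :=
  Relation.TransGen Υ.edge
/-- A role item `r(C, N, U)`: a trace together with non-origination and
unique-origination assumption sequences of the same length. -/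
structure RoleItemT (V : Type) where
  C : List (EvtT V)
  N : List (Set (MTerm V))
  U : List (Set (MTerm V))
  ne : C ≠ []
  lenN : N.length = C.length
  lenU : U.length = C.length

/-- Apply a substitution to a role item. -/
def RoleItemT.subst {V W : Type} (so' : W → MSort) (σ : V → MTerm W)
    (r : RoleItemT V) : RoleItemT W where
  C := r.C.map (EvtT.subst so' σ)
  N := r.N.map (fun X => (MTerm.subst so' σ) '' X)
  U := r.U.map (fun X => (MTerm.subst so' σ) '' X)
  ne := by
    intro h
    have hl : r.C.length = 0 := by simpa using congrArg List.length h
    exact r.ne (List.length_eq_zero_iff.mp hl)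
  lenN := by simpa using r.lenN
  lenU := by simpa using r.lenU

/-- Strand `s` is an instance of role item `r` in `Θ`. -/
def InstOf {V : Type} (Θ : SSpaceT V) (s : ℕ) (r : RoleItemT V) : Prop :=
  Θ.IsStrand s ∧
  (Θ.trace s).length ≤ r.C.length ∧
  r.C.take (Θ.trace s).length = Θ.trace s ∧
  (∀ i < (Θ.trace s).length, ∀ t ∈ r.N.getD i ∅, Θ.Non t) ∧
  (∀ i < (Θ.trace s).length, ∀ t ∈ r.U.getD i ∅, Θ.Uniq t (s, i))

/-- `htin(Θ, z, h, r)`: strand `z` has height at least `h` and instantiates `r`. -/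
def Htin {V : Type} (Θ : SSpaceT V) (z h : ℕ) (r : RoleItemT V) : Prop :=
  h ≤ (Θ.trace z).length ∧ InstOf Θ z r

/-- A bundle is a run of the protocol `P` (a set of roles, i.e. of sets of
ground role items) when some role assignment makes each strand an instance of
a role item of its assigned role. -/
def RunOf (Υ : Bundle) (P : Set (Set (RoleItemT Empty))) : Prop :=
  ∃ rl : ℕ → Set (RoleItemT Empty),
    ∀ s, Υ.Θ.IsStrand s → rl s ∈ P ∧ ∃ r ∈ rl s, InstOf Υ.Θ s r
/-- Ground messages of sort A (asymmetric keys). -/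
def SortA (t : Msg) : Prop := t.srt gSo = some .A
/-- Ground messages of sort S (symmetric keys). -/
def SortS (t : Msg) : Prop := t.srt gSo = some .S
/-- Ground messages of sort D (data). -/
def SortD (t : Msg) : Prop := t.srt gSo = some .D

/-- Key inverse on ground messages. -/
def minv (t : Msg) : Msg := MTerm.invOp gSo t

/-- Adversary role item: create an atom out of thin air. -/
def createItem (t : Msg) : RoleItemT Empty where
  C := [.send t]
  N := [∅]
  U := [∅]
  ne := by simp
  lenN := rfl
  lenU := rfl

/-- Adversary role item: pairing. -/
def pairItem (t₀ t₁ : Msg) : RoleItemT Empty where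
  C := [.recv t₀, .recv t₁, .send (.pair t₀ t₁)]
  N := [∅, ∅, ∅]
  U := [∅, ∅, ∅]
  ne := by simp
  lenN := rfl
  lenU := rfl

/-- Adversary role item: separation. -/
def sepItem (t₀ t₁ : Msg) : RoleItemT Empty where
  C := [.recv (.pair t₀ t₁), .send t₀, .send t₁]
  N := [∅, ∅, ∅]
  U := [∅, ∅, ∅]
  ne := by simp
  lenN := rfl
  lenU := rfl

/-- Adversary role item: encryption. -/
def encItem (t k : Msg) : RoleItemT Empty where
  C := [.recv t, .recv k, .send (.enc t k)]
  N := [∅, ∅, ∅]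
  U := [∅, ∅, ∅]
  ne := by simp
  lenN := rfl
  lenU := rfl

/-- Adversary role item: decryption. -/
def decItem (t k : Msg) : RoleItemT Empty where
  C := [.recv (.enc t k), .recv (minv k), .send t]
  N := [∅, ∅, ∅]
  U := [∅, ∅, ∅]
  ne := by simp
  lenN := rfl
  lenU := rfl

def createRole : Set (RoleItemT Empty) :=
  { r | ∃ t : Msg, IsAtomM gSo t ∧ r = createItem t }
def pairRole : Set (RoleItemT Empty) :=
  { r | ∃ t₀ t₁ : Msg, WellSorted gSo t₀ ∧ WellSorted gSo t₁ ∧ r = pairItem t₀ t₁ }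
def sepRole : Set (RoleItemT Empty) :=
  { r | ∃ t₀ t₁ : Msg, WellSorted gSo t₀ ∧ WellSorted gSo t₁ ∧ r = sepItem t₀ t₁ }
def encRole : Set (RoleItemT Empty) :=
  { r | ∃ t k : Msg, WellSorted gSo t ∧ (SortA k ∨ SortS k) ∧ r = encItem t k }
def decRole : Set (RoleItemT Empty) :=
  { r | ∃ t k : Msg, WellSorted gSo t ∧ (SortA k ∨ SortS k) ∧ r = decItem t k }

/-- Initiator role item of the amended Blanchet protocol:
`⟨+{{(s, b)}_{a⁻¹}}_b, −{d}_s⟩`, with `s` assumed uniquely originating at the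
first event. -/
def initItemA (a b s d : Msg) : RoleItemT Empty where
  C := [.send (.enc (.enc (.pair s b) (minv a)) b), .recv (.enc d s)]
  N := [∅, ∅]
  U := [{s}, ∅]
  ne := by simp
  lenN := rfl
  lenU := rfl

/-- Responder role item of the amended Blanchet protocol:
`⟨−{{(s, b)}_{a⁻¹}}_b, +{d}_s⟩`. -/
def respItemA (a b s d : Msg) : RoleItemT Empty where
  C := [.recv (.enc (.enc (.pair s b) (minv a)) b), .send (.enc d s)]
  N := [∅, ∅]
  U := [∅, ∅]
  ne := by simp
  lenN := rfl
  lenU := rfl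

def initRoleA : Set (RoleItemT Empty) :=
  { r | ∃ a b s d : Msg, SortA a ∧ SortA b ∧ SortS s ∧ SortD d ∧ r = initItemA a b s d }
def respRoleA : Set (RoleItemT Empty) :=
  { r | ∃ a b s d : Msg, SortA a ∧ SortA b ∧ SortS s ∧ SortD d ∧ r = respItemA a b s d }

/-- The amended Blanchet protocol, including the adversary roles. -/
def amendedProt : Set (Set (RoleItemT Empty)) :=
  {initRoleA, respRoleA, createRole, pairRole, sepRole, encRole, decRole}


section AuxProof

lemma srt_pair_top {V : Type} (so : V → MSort) {t₀ t₁ : MTerm V} {x : MSort}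
    (h : (MTerm.pair t₀ t₁).srt so = some x) : x = MSort.top := by
  simp only [MTerm.srt] at h
  split at h
  · exact (Option.some.inj h).symm
  · exact absurd h (by simp)

lemma srt_enc_top {V : Type} (so : V → MSort) {t k : MTerm V} {x : MSort}
    (h : (MTerm.enc t k).srt so = some x) : x = MSort.top := by
  simp only [MTerm.srt] at h
  split at h
  · exact (Option.some.inj h).symm
  · exact (Option.some.inj h).symm
  · exact absurd h (by simp)

lemma carries_atomic {V : Type} (so : V → MSort) {t u : MTerm V} {x : MSort}
    (hx : t.srt so = some x) (hxt : x ≠ MSort.top) (h : Carries u t) : u = t := by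
  cases h with
  | refl => rfl
  | pairL h' => exact absurd (srt_pair_top so hx) hxt
  | pairR h' => exact absurd (srt_pair_top so hx) hxt
  | encP h' => exact absurd (srt_enc_top so hx) hxt

lemma carries_enc_inv {V : Type} {u t k : MTerm V} (h : Carries u (MTerm.enc t k)) :
    u = MTerm.enc t k ∨ Carries u t := by
  cases h with
  | refl => exact Or.inl rfl
  | encP h' => exact Or.inr h'

lemma carries_pair_inv {V : Type} {u t₀ t₁ : MTerm V} (h : Carries u (MTerm.pair t₀ t₁)) :
    u = MTerm.pair t₀ t₁ ∨ Carries u t₀ ∨ Carries u t₁ := by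
  cases h with
  | refl => exact Or.inl rfl
  | pairL h' => exact Or.inr (Or.inl h')
  | pairR h' => exact Or.inr (Or.inr h')

lemma getD_take' {α : Type _} {l : List α} {n i : ℕ} (d : α) (h : i < n) :
    (l.take n).getD i d = l.getD i d := by
  simp [List.getD_eq_getElem?_getD, List.getElem?_take, h]

lemma length_le_fold {α : Type _} (L : List (List α)) (l : List α) (h : l ∈ L) :
    l.length ≤ L.foldr (fun c n => max c.length n) 0 := by
  induction L with
  | nil => cases h
  | cons a L ih =>
      rcases List.mem_cons.mp h with h | h
      · subst h; exact le_max_left _ _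
      · exact le_trans (ih h) (le_max_right _ _)

lemma prec_chain (Υ : Bundle) (x : ℕ) : ∀ i j, j < i → Υ.Θ.IsNode (x, i) →
    Relation.TransGen Υ.edge (x, j) (x, i) := by
  intro i
  induction i with
  | zero => omega
  | succ k ih =>
      intro j hj hnode
      rcases Nat.lt_succ_iff_lt_or_eq.mp hj with hj' | hj'
      · have hk : Υ.Θ.IsNode (x, k) := ⟨hnode.1, by have := hnode.2; simp at this ⊢; omega⟩
        exact Relation.TransGen.tail (ih j hj' hk) (Or.inl ⟨rfl, rfl, hnode⟩)
      · subst hj'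
        exact Relation.TransGen.single (Or.inl ⟨rfl, rfl, hnode⟩)

lemma orig_exists (Υ : Bundle) (t : Msg) (n : ℕ × ℕ) (hn : Υ.Θ.IsNode n)
    (hc : Carries t (Υ.Θ.evt n).msg) :
    ∃ w i, Υ.Θ.IsStrand w ∧ OrigAt (Υ.Θ.trace w) t i := by
  classical
  set S : Set (ℕ × ℕ) := {m | Υ.Θ.IsNode m ∧ Carries t (Υ.Θ.evt m).msg} with hSdef
  have hbound : ∀ m ∈ S, m.1 < Υ.Θ.tr.length ∧
      m.2 < Υ.Θ.tr.foldr (fun c n => max c.length n) 0 + 1 := by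
    intro m hm
    refine ⟨hm.1.1, ?_⟩
    have h2 := hm.1.2
    have htr : Υ.Θ.trace m.1 ∈ Υ.Θ.tr ∨ Υ.Θ.trace m.1 = [] := by
      by_cases hlt : m.1 < Υ.Θ.tr.length
      · left
        have : Υ.Θ.trace m.1 = Υ.Θ.tr[m.1] := List.getD_eq_getElem _ _ hlt
        rw [this]; exact List.getElem_mem _
      · right
        exact List.getD_eq_default _ _ (le_of_not_gt hlt)
    rcases htr with htr | htr
    · have := length_le_fold Υ.Θ.tr _ htr; omega
    · rw [htr] at h2; simp at h2
  have hfin : S.Finite := by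
    apply Set.Finite.subset ((Set.finite_Iio Υ.Θ.tr.length).prod
      (Set.finite_Iio (Υ.Θ.tr.foldr (fun c n => max c.length n) 0 + 1)))
    intro m hm
    exact ⟨(hbound m hm).1, (hbound m hm).2⟩
  have hfinS : Finite ↥S := hfin.to_subtype
  let r : ↥S → ↥S → Prop := fun x y => Υ.prec x.1 y.1
  have htrans : IsTrans ↥S r := ⟨fun a b c hab hbc => Relation.TransGen.trans hab hbc⟩
  have hirr : IsIrrefl ↥S r := ⟨fun a ha => Υ.acyclic a.1 ha⟩
  have hwf : WellFounded r := Finite.wellFounded_of_trans_of_irrefl r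
  obtain ⟨m, -, hmmin⟩ := hwf.has_min Set.univ ⟨⟨n, hn, hc⟩, trivial⟩
  obtain ⟨hmnode, hmc⟩ := m.2
  have hminS : ∀ m' ∈ S, ¬ Υ.prec m' m.1 := fun m' hm' hp => hmmin ⟨m', hm'⟩ trivial hp
  cases hevt : Υ.Θ.evt m.1 with
  | recv t' =>
      have hrecv : (Υ.Θ.evt m.1).IsRecv := by rw [hevt]; trivial
      obtain ⟨n₀, hcomm, -⟩ := Υ.comm_uniq m.1 hmnode hrecv
      obtain ⟨t'', hs0, hr0⟩ := Υ.comm_evt _ _ hcomm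
      have htt : t' = t'' := by rw [hevt] at hr0; injection hr0
      have hn₀S : n₀ ∈ S := by
        refine ⟨(Υ.comm_nodes _ _ hcomm).1, ?_⟩
        rw [hs0, ← htt]
        rw [hevt] at hmc
        exact hmc
      have hpr : Υ.prec n₀ m.1 := Relation.TransGen.single (show Υ.edge _ _ from Or.inr hcomm)
      exact absurd hpr (hminS n₀ hn₀S)
  | send t' =>
      refine ⟨m.1.1, m.1.2, hmnode.1, hmnode.2, ?_, hmc, ?_⟩
      · show (Υ.Θ.evt m.1).IsSend
        rw [hevt]; trivial
      · intro j hj hcj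
        have hjS : (m.1.1, j) ∈ S := ⟨⟨hmnode.1, lt_trans hj hmnode.2⟩, hcj⟩
        have : Υ.prec (m.1.1, j) m.1 := prec_chain Υ m.1.1 m.1.2 j hj ⟨hmnode.1, hmnode.2⟩
        exact hminS _ hjS this

end AuxProof

/-- The amended Blanchet protocol achieves its authentication goal: in every
run of the protocol, a full-length responder strand with `a⁻¹` and `b⁻¹`
non-originating guarantees an initiator strand of height 1 that agrees on the
keys `a`, `b` and the symmetric key `s`. -/
theorem amended_blanchet_authentication (Υ : Bundle)
    (hrun : RunOf Υ amendedProt)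
    (a b s d : Msg) (ha : SortA a) (hb : SortA b) (hs : SortS s) (hd : SortD d)
    (z : ℕ) (hz : Υ.Θ.IsStrand z)
    (hresp : Htin Υ.Θ z 2 (respItemA a b s d))
    (hna : Υ.Θ.Non (minv a)) (hnb : Υ.Θ.Non (minv b)) :
    ∃ (d₀ : Msg) (z₀ : ℕ),
      SortD d₀ ∧ Υ.Θ.IsStrand z₀ ∧ Htin Υ.Θ z₀ 1 (initItemA a b s d₀) := by
    classical
  obtain ⟨h2, hzs, hleC, htakeC, -, -⟩ := hresp
  have hlen2 : (Υ.Θ.trace z).length = 2 := le_antisymm hleC h2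
  have htr : Υ.Θ.trace z = (respItemA a b s d).C := by
    rw [← htakeC, hlen2]; rfl
  have hnode0 : Υ.Θ.IsNode (z, 0) := ⟨hz, by simp [hlen2]⟩
  have hc0 : Carries (MTerm.enc (MTerm.pair s b) (minv a)) (Υ.Θ.evt (z,0)).msg := by
    show Carries _ (((Υ.Θ.trace z).getD 0 dEvt).msg)
    rw [htr]
    exact Carries.encP (Carries.refl _)
  obtain ⟨w, i, hw, horig⟩ := orig_exists Υ _ (z,0) hnode0 hc0
  obtain ⟨rl, hrl⟩ := hrun
  obtain ⟨hmem, r, hrR, hinst⟩ := hrl w hw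
  obtain ⟨hin1, hleC', htakeC', hin4, hin5⟩ := hinst
  obtain ⟨hi, hsend, hcar, hmin⟩ := horig
  have hev : ∀ j, j < (Υ.Θ.trace w).length →
      (Υ.Θ.trace w).getD j dEvt = r.C.getD j dEvt := by
    intro j hj
    conv_lhs => rw [← htakeC']
    exact getD_take' _ hj
  simp only [amendedProt, Set.mem_insert_iff, Set.mem_singleton_iff] at hmem
  rcases hmem with h | h | h | h | h | h | h
  · -- init role
    rw [h] at hrR
    obtain ⟨a₁, b₁, s₁, d₁, ha₁, hb₁, hs₁, hd₁, rfl⟩ := hrR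
    have hlt : i < 2 := lt_of_lt_of_le hi hleC'
    interval_cases i
    · rw [hev 0 hi] at hcar
      simp only [initItemA, List.getD_cons_zero, EvtT.msg] at hcar
      rcases carries_enc_inv hcar with h1 | h1
      · simp at h1
      · rcases carries_enc_inv h1 with h2 | h2
        · injection h2 with hp hk
          injection hp with hss hbb
          subst hss; subst hbb
          refine ⟨d₁, w, hd₁, hw, hi, ?_⟩
          have hEq : initItemA a b s d₁ = initItemA a₁ b s d₁ := by
            simp only [initItemA, hk]
          rw [hEq]
          exact ⟨hin1, hleC', htakeC', hin4, hin5⟩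
        · rcases carries_pair_inv h2 with h3 | h3 | h3
          · simp at h3
          · have := carries_atomic gSo hs₁ (by simp) h3
            rw [← this] at hs₁
            exact absurd (srt_enc_top gSo hs₁) (by simp)
          · have := carries_atomic gSo hb₁ (by simp) h3
            rw [← this] at hb₁
            exact absurd (srt_enc_top gSo hb₁) (by simp)
    · rw [hev 1 hi] at hsend
      simp only [respItemA, initItemA, List.getD_cons_succ, List.getD_cons_zero] at hsend
      exact False.elim hsend
  · -- resp role
    rw [h] at hrR
    obtain ⟨a₁, b₁, s₁, d₁, ha₁, hb₁, hs₁, hd₁, rfl⟩ := hrR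
    have hlt : i < 2 := lt_of_lt_of_le hi hleC'
    interval_cases i
    · rw [hev 0 hi] at hsend
      simp only [respItemA, List.getD_cons_zero] at hsend
      exact False.elim hsend
    · rw [hev 1 hi] at hcar
      simp only [respItemA, List.getD_cons_succ, List.getD_cons_zero, EvtT.msg] at hcar
      rcases carries_enc_inv hcar with h1 | h1
      · injection h1 with hp hk
        rw [← hp] at hd₁
        exact absurd (srt_pair_top gSo hd₁) (by simp)
      · have := carries_atomic gSo hd₁ (by simp) h1
        rw [← this] at hd₁
        exact absurd (srt_enc_top gSo hd₁) (by simp)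
  · -- create role
    rw [h] at hrR
    obtain ⟨t, hatom, rfl⟩ := hrR
    have hlt : i < 1 := lt_of_lt_of_le hi hleC'
    interval_cases i
    rw [hev 0 hi] at hcar
    simp only [createItem, List.getD_cons_zero, EvtT.msg] at hcar
    rcases hatom with hA | hA | hA
    all_goals {
      have := carries_atomic gSo hA (by simp) hcar
      rw [← this] at hA
      exact absurd (srt_enc_top gSo hA) (by simp)
    }
  · -- pair role
    rw [h] at hrR
    obtain ⟨t₁, t₂, hw₁, hw₂, rfl⟩ := hrR
    have hlt : i < 3 := lt_of_lt_of_le hi hleC'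
    interval_cases i
    · rw [hev 0 hi] at hsend
      simp only [pairItem, List.getD_cons_zero] at hsend
      exact False.elim hsend
    · rw [hev 1 hi] at hsend
      simp only [pairItem, List.getD_cons_succ, List.getD_cons_zero] at hsend
      exact False.elim hsend
    · rw [hev 2 hi] at hcar
      simp only [pairItem, List.getD_cons_succ, List.getD_cons_zero, EvtT.msg] at hcar
      rcases carries_pair_inv hcar with h1 | h1 | h1
      · simp at h1
      · refine absurd ?_ (hmin 0 (by omega))
        rw [hev 0 (by omega)]
        simpa [pairItem, EvtT.msg] using h1
      · refine absurd ?_ (hmin 1 (by omega))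
        rw [hev 1 (by omega)]
        simpa [pairItem, EvtT.msg] using h1
  · -- sep role
    rw [h] at hrR
    obtain ⟨t₁, t₂, hw₁, hw₂, rfl⟩ := hrR
    have hlt : i < 3 := lt_of_lt_of_le hi hleC'
    interval_cases i
    · rw [hev 0 hi] at hsend
      simp only [sepItem, List.getD_cons_zero] at hsend
      exact False.elim hsend
    · rw [hev 1 hi] at hcar
      simp only [sepItem, List.getD_cons_succ, List.getD_cons_zero, EvtT.msg] at hcar
      refine absurd ?_ (hmin 0 (by omega))
      rw [hev 0 (by omega)]
      simpa [sepItem, EvtT.msg] using Carries.pairL (t₁ := t₂) hcar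
    · rw [hev 2 hi] at hcar
      simp only [sepItem, List.getD_cons_succ, List.getD_cons_zero, EvtT.msg] at hcar
      refine absurd ?_ (hmin 0 (by omega))
      rw [hev 0 (by omega)]
      simpa [sepItem, EvtT.msg] using Carries.pairR (t₀ := t₁) hcar
  · -- enc role
    rw [h] at hrR
    obtain ⟨t, k, hwt, hk, rfl⟩ := hrR
    have hlt : i < 3 := lt_of_lt_of_le hi hleC'
    interval_cases i
    · rw [hev 0 hi] at hsend
      simp only [encItem, List.getD_cons_zero] at hsend
      exact False.elim hsend
    · rw [hev 1 hi] at hsend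
      simp only [encItem, List.getD_cons_succ, List.getD_cons_zero] at hsend
      exact False.elim hsend
    · rw [hev 2 hi] at hcar
      simp only [encItem, List.getD_cons_succ, List.getD_cons_zero, EvtT.msg] at hcar
      rcases carries_enc_inv hcar with h1 | h1
      · injection h1 with hp hkk
        have hnode1 : Υ.Θ.IsNode (w, 1) := ⟨hw, show 1 < (Υ.Θ.trace w).length by omega⟩
        have hc1 : Carries (minv a) (Υ.Θ.evt (w,1)).msg := by
          show Carries _ (((Υ.Θ.trace w).getD 1 dEvt).msg)
          rw [hev 1 (by omega), ← hkk]
          exact Carries.refl _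
        obtain ⟨w', i', hw', ho'⟩ := orig_exists Υ (minv a) (w,1) hnode1 hc1
        exact absurd ho' (hna w' hw' i')
      · refine absurd ?_ (hmin 0 (by omega))
        rw [hev 0 (by omega)]
        simpa [encItem, EvtT.msg] using h1
  · -- dec role
    rw [h] at hrR
    obtain ⟨t, k, hwt, hk, rfl⟩ := hrR
    have hlt : i < 3 := lt_of_lt_of_le hi hleC'
    interval_cases i
    · rw [hev 0 hi] at hsend
      simp only [decItem, List.getD_cons_zero] at hsend
      exact False.elim hsend
    · rw [hev 1 hi] at hsend
      simp only [decItem, List.getD_cons_succ, List.getD_cons_zero] at hsend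
      exact False.elim hsend
    · rw [hev 2 hi] at hcar
      simp only [decItem, List.getD_cons_succ, List.getD_cons_zero, EvtT.msg] at hcar
      refine absurd ?_ (hmin 0 (by omega))
      rw [hev 0 (by omega)]
      simpa [decItem, EvtT.msg] using Carries.encP (k := k) hcar
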